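/- Define the iteration w⁽¹⁾ = E₀/s + max_{1 ≤ l ≤ m} 1/γ_l and w⁽ᵏ⁺¹⁾ = F(w⁽ᵏ⁾) for k ≥ 1. Then: (i) every iterate w⁽ᵏ⁾ is positive; (ii) the sequence (w⁽ᵏ⁾) is nonincreasing; (iii) it converges to a limit w* > 0 satisfying F(w*) = w*; and (iv) w* dominates every sub-fixed point: for every x > 0 with x ≤ F(x) one has x ≤ w*. In particular w* is the largest w > 0 with w ≤ F(w), i.e., the throughput-maximizing water level. -/

import Mathlib

open Finset

/-- Energy water-level bound `w^e(w)`. -/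
noncomputable def wEnergy (m : ℕ) (γ : ℕ → ℝ) (s : ℝ) (E : ℕ → ℝ) (w : ℝ) : ℝ :=
  ⨅ u : Fin m,
    (E u + s * ∑ l ∈ Finset.Icc 1 ((u : ℕ) + 1), min (1 / γ l) w) /
      (s * ((u : ℕ) + 1))

/-- Data water-level bound `w^b(w)`. -/
noncomputable def wData (m : ℕ) (γ : ℕ → ℝ) (s W : ℝ) (D : ℕ → ℝ) (w : ℝ) : ℝ :=
  (2 : ℝ) ^
    (⨅ v : Fin m,
      (D v + s * W * ∑ l ∈ Finset.Icc 1 ((v : ℕ) + 1),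
          Real.logb 2 (min (1 / γ l) w)) /
        (s * W * ((v : ℕ) + 1)))

/-- The iteration map `F(w) = min(w^e(w), w^b(w))`. -/
noncomputable def Fmap (m : ℕ) (γ : ℕ → ℝ) (s W : ℝ) (E D : ℕ → ℝ) (w : ℝ) : ℝ :=
  min (wEnergy m γ s E w) (wData m γ s W D w)

lemma aux_mono (m : ℕ) (hm : 1 ≤ m) (γ : ℕ → ℝ)
    (hγ : ∀ l, 1 ≤ l → l ≤ m → 0 < γ l) (s W : ℝ) (hs : 0 < s) (hW : 0 < W)
    (E D : ℕ → ℝ) {a b : ℝ} (ha : 0 < a) (hab : a ≤ b) :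
    Fmap m γ s W E D a ≤ Fmap m γ s W E D b := by
  haveI : Nonempty (Fin m) := ⟨⟨0, hm⟩⟩
  refine min_le_min ?_ ?_
  · refine ciInf_mono ((Set.finite_range _).bddBelow) fun u => ?_
    gcongr with l hl
  · refine Real.rpow_le_rpow_of_exponent_le (by norm_num) ?_
    refine ciInf_mono ((Set.finite_range _).bddBelow) fun v => ?_
    gcongr with l hl
    · norm_num
    · rw [Finset.mem_Icc] at hl
      have h1 := hγ l hl.1 (hl.2.trans (Nat.succ_le_of_lt v.isLt))
      exact lt_min (by positivity) ha

lemma aux_lower (m : ℕ) (hm : 1 ≤ m) (γ : ℕ → ℝ)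
    (hγ : ∀ l, 1 ≤ l → l ≤ m → 0 < γ l) (s W : ℝ) (hs : 0 < s) (hW : 0 < W)
    (E D : ℕ → ℝ) (hE : ∀ u, u ≤ m - 1 → 0 ≤ E u) (hD : ∀ v, v ≤ m - 1 → 0 ≤ D v)
    {c w : ℝ} (hc : 0 < c) (hcle : ∀ l, 1 ≤ l → l ≤ m → c ≤ 1 / γ l)
    (hw : c ≤ w) : c ≤ Fmap m γ s W E D w := by
  haveI : Nonempty (Fin m) := ⟨⟨0, hm⟩⟩
  have key : ∀ l, 1 ≤ l → l ≤ m → c ≤ min (1 / γ l) w :=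
    fun l h1 h2 => le_min (hcle l h1 h2) hw
  refine le_min ?_ ?_
  · refine le_ciInf fun u => ?_
    have hum : (u : ℕ) + 1 ≤ m := u.isLt
    have hden : (0:ℝ) < s * ((u : ℕ) + 1) := by positivity
    rw [le_div_iff₀ hden]
    have hsum : ((u : ℕ) + 1 : ℝ) * c ≤
        ∑ l ∈ Finset.Icc 1 ((u : ℕ) + 1), min (1 / γ l) w := by
      have := Finset.card_nsmul_le_sum (Finset.Icc 1 ((u : ℕ) + 1))
        (fun l => min (1 / γ l) w) c
        (fun l hl => by
          rw [Finset.mem_Icc] at hl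
          exact key l hl.1 (hl.2.trans hum))
      simpa [Nat.card_Icc, nsmul_eq_mul] using this
    have hEu : 0 ≤ E (u : ℕ) := hE _ (Nat.le_sub_one_of_lt u.isLt)
    nlinarith
  · have h2 : (1:ℝ) < 2 := one_lt_two
    rw [show c = (2:ℝ) ^ Real.logb 2 c from
      (Real.rpow_logb (by norm_num) (by norm_num) hc).symm]
    refine Real.rpow_le_rpow_of_exponent_le (by norm_num) ?_
    refine le_ciInf fun v => ?_
    have hvm : (v : ℕ) + 1 ≤ m := v.isLt
    have hden : (0:ℝ) < s * W * ((v : ℕ) + 1) := by positivity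
    rw [le_div_iff₀ hden]
    have hsum : ((v : ℕ) + 1 : ℝ) * Real.logb 2 c ≤
        ∑ l ∈ Finset.Icc 1 ((v : ℕ) + 1), Real.logb 2 (min (1 / γ l) w) := by
      have := Finset.card_nsmul_le_sum (Finset.Icc 1 ((v : ℕ) + 1))
        (fun l => Real.logb 2 (min (1 / γ l) w)) (Real.logb 2 c)
        (fun l hl => by
          rw [Finset.mem_Icc] at hl
          exact Real.logb_le_logb_of_le h2 hc (key l hl.1 (hl.2.trans hvm)))
      simpa [Nat.card_Icc, nsmul_eq_mul] using this
    have hDv : 0 ≤ D (v : ℕ) := hD _ (Nat.le_sub_one_of_lt v.isLt)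
    nlinarith

lemma aux_upper (m : ℕ) (hm : 1 ≤ m) (γ : ℕ → ℝ) (s W : ℝ) (hs : 0 < s)
    (E D : ℕ → ℝ) (w : ℝ) :
    Fmap m γ s W E D w ≤ E 0 / s + min (1 / γ 1) w := by
  haveI : Nonempty (Fin m) := ⟨⟨0, hm⟩⟩
  refine (min_le_left _ _).trans ?_
  refine (ciInf_le ((Set.finite_range _).bddBelow) (⟨0, hm⟩ : Fin m)).trans ?_
  simp only [Fin.val_mk, Nat.cast_zero, zero_add, Finset.Icc_self,
    Finset.sum_singleton, mul_one]
  rw [add_div, mul_div_cancel_left₀ _ hs.ne']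

lemma aux_cont (m : ℕ) (hm : 1 ≤ m) (γ : ℕ → ℝ)
    (hγ : ∀ l, 1 ≤ l → l ≤ m → 0 < γ l) (s W : ℝ) (hs : 0 < s) (hW : 0 < W)
    (E D : ℕ → ℝ) {x : ℝ} (hx : 0 < x) :
    ContinuousAt (Fmap m γ s W E D) x := by
  haveI : Nonempty (Fin m) := ⟨⟨0, hm⟩⟩
  have hsumE : ∀ u : Fin m, ContinuousAt
      (fun w => (E (u:ℕ) + s * ∑ l ∈ Finset.Icc 1 ((u : ℕ) + 1), min (1 / γ l) w) /
        (s * ((u : ℕ) + 1))) x := by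
    intro u
    refine ContinuousAt.div_const ?_ _
    refine continuousAt_const.add (continuousAt_const.mul ?_)
    exact tendsto_finset_sum _ fun l _ =>
      (continuousAt_const.min continuousAt_id)
  have hEcont : ContinuousAt (wEnergy m γ s E) x := by
    have hrw : wEnergy m γ s E = fun w =>
        Finset.univ.inf' Finset.univ_nonempty (fun u : Fin m =>
          (E (u:ℕ) + s * ∑ l ∈ Finset.Icc 1 ((u : ℕ) + 1), min (1 / γ l) w) /
            (s * ((u : ℕ) + 1))) := by
      funext w
      rw [Finset.inf'_univ_eq_ciInf]
      rfl
    rw [hrw]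
    exact ContinuousAt.finset_inf'_apply Finset.univ_nonempty fun u _ => hsumE u
  have hsumD : ∀ v : Fin m, ContinuousAt
      (fun w => (D (v:ℕ) + s * W * ∑ l ∈ Finset.Icc 1 ((v : ℕ) + 1),
          Real.logb 2 (min (1 / γ l) w)) / (s * W * ((v : ℕ) + 1))) x := by
    intro v
    refine ContinuousAt.div_const ?_ _
    refine continuousAt_const.add (continuousAt_const.mul ?_)
    refine tendsto_finset_sum _ fun l hl => ?_
    rw [Finset.mem_Icc] at hl
    have hγl := hγ l hl.1 (hl.2.trans v.isLt)
    have hne : min (1 / γ l) x ≠ 0 := (lt_min (by positivity) hx).ne'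
    exact (Real.continuousAt_logb hne).comp (continuousAt_const.min continuousAt_id)
  have hDcont : ContinuousAt (wData m γ s W D) x := by
    have hinf : ContinuousAt (fun w => ⨅ v : Fin m,
        (D (v:ℕ) + s * W * ∑ l ∈ Finset.Icc 1 ((v : ℕ) + 1),
          Real.logb 2 (min (1 / γ l) w)) / (s * W * ((v : ℕ) + 1))) x := by
      have hrw : (fun w => ⨅ v : Fin m,
          (D (v:ℕ) + s * W * ∑ l ∈ Finset.Icc 1 ((v : ℕ) + 1),
            Real.logb 2 (min (1 / γ l) w)) / (s * W * ((v : ℕ) + 1))) = fun w =>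
          Finset.univ.inf' Finset.univ_nonempty (fun v : Fin m =>
          (D (v:ℕ) + s * W * ∑ l ∈ Finset.Icc 1 ((v : ℕ) + 1),
            Real.logb 2 (min (1 / γ l) w)) / (s * W * ((v : ℕ) + 1))) := by
        funext w
        rw [Finset.inf'_univ_eq_ciInf]
      rw [hrw]
      exact ContinuousAt.finset_inf'_apply Finset.univ_nonempty fun v _ => hsumD v
    exact (Real.continuousAt_const_rpow (by norm_num : (2:ℝ) ≠ 0)).comp hinf
  exact hEcont.min hDcont

theorem stmt_10' (m : ℕ) (hm : 1 ≤ m) (γ : ℕ → ℝ)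
    (hγ : ∀ l, 1 ≤ l → l ≤ m → 0 < γ l) (s W : ℝ) (hs : 0 < s) (hW : 0 < W)
    (E D : ℕ → ℝ) (hE : ∀ u, u ≤ m - 1 → 0 ≤ E u) (hD : ∀ v, v ≤ m - 1 → 0 ≤ D v)
    (wSeq : ℕ → ℝ)
    (hInit : wSeq 1 = E 0 / s +
      (Finset.Icc 1 m).sup' (Finset.nonempty_Icc.mpr hm) (fun l => 1 / γ l))
    (hStep : ∀ k, 1 ≤ k → wSeq (k + 1) = Fmap m γ s W E D (wSeq k)) :
    (∀ k, 1 ≤ k → 0 < wSeq k) ∧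
    (∀ k, 1 ≤ k → wSeq (k + 1) ≤ wSeq k) ∧
    (∃ wStar : ℝ, 0 < wStar ∧
      Filter.Tendsto wSeq Filter.atTop (nhds wStar) ∧
      Fmap m γ s W E D wStar = wStar ∧
      (∀ x : ℝ, 0 < x → x ≤ Fmap m γ s W E D x → x ≤ wStar)) := by
  have hne : (Finset.Icc 1 m).Nonempty := Finset.nonempty_Icc.mpr hm
  set c : ℝ := (Finset.Icc 1 m).inf' hne (fun l => 1 / γ l) with hc_def
  have hcpos : 0 < c := by
    rw [hc_def, Finset.lt_inf'_iff]
    intro l hl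
    rw [Finset.mem_Icc] at hl
    have := hγ l hl.1 hl.2
    positivity
  have hcle : ∀ l, 1 ≤ l → l ≤ m → c ≤ 1 / γ l := fun l h1 h2 =>
    Finset.inf'_le _ (Finset.mem_Icc.mpr ⟨h1, h2⟩)
  have hE0 : (0:ℝ) ≤ E 0 / s := div_nonneg (hE 0 (Nat.zero_le _)) hs.le
  have hsup1 : (1 : ℝ) / γ 1 ≤ (Finset.Icc 1 m).sup' hne (fun l => 1 / γ l) :=
    Finset.le_sup' (fun l => 1 / γ l) (Finset.mem_Icc.mpr ⟨le_rfl, hm⟩)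
  have hw1c : c ≤ wSeq 1 := by
    rw [hInit]
    have := (hcle 1 le_rfl hm).trans hsup1
    linarith
  have hlow : ∀ k, 1 ≤ k → c ≤ wSeq k := by
    intro k hk
    induction k, hk using Nat.le_induction with
    | base => exact hw1c
    | succ n hn ih =>
      rw [hStep n hn]
      exact aux_lower m hm γ hγ s W hs hW E D hE hD hcpos hcle ih
  have hpos : ∀ k, 1 ≤ k → 0 < wSeq k := fun k hk => hcpos.trans_le (hlow k hk)
  have hdec : ∀ k, 1 ≤ k → wSeq (k + 1) ≤ wSeq k := by
    intro k hk
    induction k, hk using Nat.le_induction with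
    | base =>
      rw [hStep 1 le_rfl]
      refine (aux_upper m hm γ s W hs E D _).trans ?_
      rw [hInit]
      exact add_le_add le_rfl ((min_le_left _ _).trans hsup1)
    | succ n hn ih =>
      rw [hStep (n + 1) (by omega)]
      calc Fmap m γ s W E D (wSeq (n + 1)) ≤ Fmap m γ s W E D (wSeq n) :=
            aux_mono m hm γ hγ s W hs hW E D (hpos (n + 1) (by omega)) ih
        _ = wSeq (n + 1) := (hStep n hn).symm
  refine ⟨hpos, hdec, ?_⟩
  set g : ℕ → ℝ := fun k => wSeq (k + 1) with hg_def
  have gant : Antitone g := antitone_nat_of_succ_le fun n => hdec (n + 1) (by omega)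
  have gbdd : BddBelow (Set.range g) := by
    refine ⟨c, ?_⟩
    rintro y ⟨k, rfl⟩
    exact hlow (k + 1) (by omega)
  set wStar : ℝ := ⨅ k, g k with hws_def
  have htend : Filter.Tendsto g Filter.atTop (nhds wStar) :=
    tendsto_atTop_ciInf gant gbdd
  have hwseq : Filter.Tendsto wSeq Filter.atTop (nhds wStar) :=
    (Filter.tendsto_add_atTop_iff_nat 1).mp htend
  have hwsc : c ≤ wStar := le_ciInf fun k => hlow (k + 1) (by omega)
  have hwspos : 0 < wStar := hcpos.trans_le hwsc
  have h1 : Filter.Tendsto (fun k => g (k + 1)) Filter.atTop (nhds wStar) :=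
    (Filter.tendsto_add_atTop_iff_nat 1).mpr htend
  have h2 : (fun k => g (k + 1)) = fun k => Fmap m γ s W E D (g k) :=
    funext fun k => hStep (k + 1) (by omega)
  have h3 : Filter.Tendsto (fun k => Fmap m γ s W E D (g k)) Filter.atTop
      (nhds (Fmap m γ s W E D wStar)) :=
    (aux_cont m hm γ hγ s W hs hW E D hwspos).tendsto.comp htend
  have hfix : Fmap m γ s W E D wStar = wStar :=
    tendsto_nhds_unique h3 (h2 ▸ h1)
  refine ⟨wStar, hwspos, hwseq, hfix, ?_⟩
  intro x hx hxF
  have hx1 : x ≤ wSeq 1 := by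
    refine hxF.trans ((aux_upper m hm γ s W hs E D x).trans ?_)
    rw [hInit]
    exact add_le_add le_rfl ((min_le_left _ _).trans hsup1)
  have hxk : ∀ k, x ≤ g k := by
    intro k
    induction k with
    | zero => exact hx1
    | succ n ih =>
      have : g (n + 1) = Fmap m γ s W E D (g n) := hStep (n + 1) (by omega)
      rw [this]
      exact hxF.trans (aux_mono m hm γ hγ s W hs hW E D hx ih)
  exact le_ciInf hxk

/-- The iteration `w⁽¹⁾ = E₀/s + max_l 1/γ_l`, `w⁽ᵏ⁺¹⁾ = F(w⁽ᵏ⁾)`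
stays positive, is nonincreasing, and converges to the largest fixed point of F,
which dominates every sub-fixed point. -/
theorem stmt_10 (m : ℕ) (hm : 1 ≤ m) (γ : ℕ → ℝ)
    (hγ : ∀ l, 1 ≤ l → l ≤ m → 0 < γ l) (s W : ℝ) (hs : 0 < s) (hW : 0 < W)
    (E D : ℕ → ℝ) (hE : ∀ u, u ≤ m - 1 → 0 ≤ E u) (hD : ∀ v, v ≤ m - 1 → 0 ≤ D v)
    (wSeq : ℕ → ℝ)
    (hInit : wSeq 1 = E 0 / s +
      (Finset.Icc 1 m).sup' (Finset.nonempty_Icc.mpr hm) (fun l => 1 / γ l))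
    (hStep : ∀ k, 1 ≤ k → wSeq (k + 1) = Fmap m γ s W E D (wSeq k)) :
    (∀ k, 1 ≤ k → 0 < wSeq k) ∧
    (∀ k, 1 ≤ k → wSeq (k + 1) ≤ wSeq k) ∧
    (∃ wStar : ℝ, 0 < wStar ∧
      Filter.Tendsto wSeq Filter.atTop (nhds wStar) ∧
      Fmap m γ s W E D wStar = wStar ∧
      (∀ x : ℝ, 0 < x → x ≤ Fmap m γ s W E D x → x ≤ wStar)) :=
  stmt_10' m hm γ hγ s W hs hW E D hE hD wSeq hInit hStep
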